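/- Let R be a commutative ring. For a symmetric 3×3 matrix n over R with diagonal entries α₁, α₂, α₃ and off-diagonal entries β₁, β₂, β₃ (β_i in position (j,k) for {i,j,k} = {1,2,3}), set γ_i = α_j α_k − β_i² and define 𝖷(n) = (α₁α₂α₃)⁴·(γ₁γ₂γ₃)²·det n and 𝖣(n) = α₁α₂α₃·(γ₁γ₂γ₃)²·(det n)⁴. Then for every symmetric 3×3 matrix m over R, 𝖷(Cof m) = 𝖣(m)², where Cof m is the cofactor matrix (transpose of the adjugate) of m. -/

import Mathlib

open Matrix

/-- The cofactor matrix of a `3 × 3` matrix: the transpose of the adjugate. -/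
def Cof {R : Type*} [CommRing R] (m : Matrix (Fin 3) (Fin 3) R) :
    Matrix (Fin 3) (Fin 3) R :=
  (Matrix.adjugate m)ᵀ

/-- For a symmetric `3 × 3` matrix `n` with diagonal `α₁, α₂, α₃` and off-diagonal
`β₁, β₂, β₃` and `γᵢ = αⱼαₖ − βᵢ²`, the quantity `𝖷(n) = (α₁α₂α₃)⁴·(γ₁γ₂γ₃)²·det n`. -/
def XX {R : Type*} [CommRing R] (n : Matrix (Fin 3) (Fin 3) R) : R :=
  (n 0 0 * n 1 1 * n 2 2) ^ 4 *
    ((n 1 1 * n 2 2 - n 1 2 ^ 2) * (n 0 0 * n 2 2 - n 0 2 ^ 2) *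
      (n 0 0 * n 1 1 - n 0 1 ^ 2)) ^ 2 * n.det

/-- `𝖣(n) = α₁α₂α₃·(γ₁γ₂γ₃)²·(det n)⁴`. -/
def DD {R : Type*} [CommRing R] (n : Matrix (Fin 3) (Fin 3) R) : R :=
  (n 0 0 * n 1 1 * n 2 2) *
    ((n 1 1 * n 2 2 - n 1 2 ^ 2) * (n 0 0 * n 2 2 - n 0 2 ^ 2) *
      (n 0 0 * n 1 1 - n 0 1 ^ 2)) ^ 2 * n.det ^ 4

/-- For every symmetric `3 × 3` matrix `m` over a commutative ring,
`𝖷(Cof m) = 𝖣(m)²`. -/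
theorem stmt_8 {R : Type*} [CommRing R] (m : Matrix (Fin 3) (Fin 3) R)
    (hm : m.IsSymm) : XX (Cof m) = (DD m) ^ 2 := by
  set n := Cof m with hn
  have hcof : n = adjugate m := by
    rw [hn, Cof, adjugate_transpose, hm.eq]
  have hdet : n.det = m.det ^ 2 := by
    rw [hcof, det_adjugate]; norm_num
  have hadj : adjugate n = m.det • m := by
    rw [hcof, adjugate_adjugate m (by norm_num)]; norm_num
  -- γ' identities from entries of adjugate n
  have hnsymm : n.IsSymm := by
    rw [hcof, Matrix.IsSymm, adjugate_transpose, hm.eq]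
  have e1 : n 1 1 * n 2 2 - n 1 2 ^ 2 = m.det * m 0 0 := by
    have := congrFun (congrFun hadj 0) 0
    rw [adjugate_fin_three] at this
    simp only [Matrix.smul_apply, smul_eq_mul] at this
    rw [← this, ← hnsymm.apply 1 2]; ring_nf
    simp [cons_val_zero]
  have e2 : n 0 0 * n 2 2 - n 0 2 ^ 2 = m.det * m 1 1 := by
    have := congrFun (congrFun hadj 1) 1
    rw [adjugate_fin_three] at this
    simp only [Matrix.smul_apply, smul_eq_mul] at this
    rw [← this, ← hnsymm.apply 0 2]; ring_nf
    simp
  have e3 : n 0 0 * n 1 1 - n 0 1 ^ 2 = m.det * m 2 2 := by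
    have := congrFun (congrFun hadj 2) 2
    rw [adjugate_fin_three] at this
    simp only [Matrix.smul_apply, smul_eq_mul] at this
    rw [← this, ← hnsymm.apply 0 1]; ring_nf
    simp
  have d0 : n 0 0 = m 1 1 * m 2 2 - m 1 2 ^ 2 := by
    rw [hcof, adjugate_fin_three, ← hm.apply 1 2]; ring_nf; simp
  have d1 : n 1 1 = m 0 0 * m 2 2 - m 0 2 ^ 2 := by
    rw [hcof, adjugate_fin_three, ← hm.apply 0 2]; ring_nf; simp
  have d2 : n 2 2 = m 0 0 * m 1 1 - m 0 1 ^ 2 := by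
    rw [hcof, adjugate_fin_three, ← hm.apply 0 1]; ring_nf; simp
  simp only [XX, DD]
  rw [e1, e2, e3, hdet, d0, d1, d2]
  ring
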